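/- arXiv:1812.03888 — 3 statements merged into one kernel-verified Lean document; each statement's English description precedes it below -/
import Mathlib

section
/- Let $r$ be an odd prime and $A$ a primitive $4r$-th root of unity. For $n, m \in \{0, 1, \ldots, r-2\}$, the equality $(-1)^n A^{n(n+2)} = (-1)^m A^{m(m+2)}$ holds if and only if $n = m$. -/
lemma stmt_4_aux (r : ℕ) (hp : r.Prime) (hodd : Odd r) (n m : ℕ) (hn : n ≤ r - 2)
    (hm : m ≤ r - 2) (hle : m ≤ n)
    (hdvd : ((4 * r : ℕ) : ℤ) ∣ ((n : ℤ) - m) * (2 * r + n + m + 2)) : n = m := by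
  have hr2 : 2 ≤ r := hp.two_le
  have hrZ : Prime (r : ℤ) := Int.prime_iff_natAbs_prime.mpr (by simpa using hp)
  have hr0 : (0 : ℤ) < r := by exact_mod_cast hp.pos
  have hn' : (n : ℤ) ≤ (r : ℤ) - 2 := by have := hn; omega
  have hm' : (m : ℤ) ≤ (r : ℤ) - 2 := by have := hm; omega
  have hle' : (m : ℤ) ≤ n := by exact_mod_cast hle
  have hr4 : ((4 * r : ℕ) : ℤ) = 4 * r := by push_cast; ring
  rw [hr4] at hdvd
  have h1 : (r : ℤ) ∣ ((n : ℤ) - m) * (2 * r + n + m + 2) := dvd_trans ⟨4, by ring⟩ hdvd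
  have hrdvd : (r : ℤ) ∣ ((n : ℤ) - m) * ((n : ℤ) + m + 2) := by
    have h2 : ((n : ℤ) - m) * ((n : ℤ) + m + 2) =
        ((n : ℤ) - m) * (2 * r + n + m + 2) - r * (2 * ((n : ℤ) - m)) := by ring
    rw [h2]
    exact dvd_sub h1 (dvd_mul_right _ _)
  rcases hrZ.dvd_mul.mp hrdvd with hd | hs
  · rcases hd with ⟨k, hk⟩
    have hk1 : k < 1 := by by_contra hc; push_neg at hc; nlinarith
    have hk2 : 0 ≤ k := by by_contra hc; push_neg at hc; nlinarith
    have : k = 0 := by omega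
    rw [this, mul_zero] at hk
    omega
  · have hs' : (n : ℤ) + m + 2 = r := by
      rcases hs with ⟨k, hk⟩
      have hk1 : 1 ≤ k := by by_contra hc; push_neg at hc; nlinarith
      have hk2 : k < 2 := by by_contra hc; push_neg at hc; nlinarith
      have : k = 1 := by omega
      rw [this, mul_one] at hk
      linarith
    have h3 : (4 : ℤ) ∣ 3 * ((n : ℤ) - m) := by
      rcases hdvd with ⟨k, hk⟩
      refine ⟨k, ?_⟩
      have e1 : (3 * ((n : ℤ) - m)) * r = (4 * k) * r := by
        linear_combination hk - ((n : ℤ) - (m : ℤ)) * hs'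
      have := mul_right_cancel₀ (ne_of_gt hr0) e1
      linarith
    obtain ⟨t, ht⟩ := hodd
    have ht' : (r : ℤ) = 2 * t + 1 := by exact_mod_cast ht
    omega

theorem stmt_4 {K : Type*} [Field K] [CharZero K] (r : ℕ) (hp : r.Prime) (hodd : Odd r)
    (A : K) (hA : IsPrimitiveRoot A (4 * r)) (n m : ℕ) (hn : n ≤ r - 2) (hm : m ≤ r - 2) :
    (-1 : K) ^ n * A ^ (n * (n + 2)) = (-1 : K) ^ m * A ^ (m * (m + 2)) ↔ n = m := by
  have hrpos : 0 < r := hp.pos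
  have hA0 : A ≠ 0 := hA.ne_zero (by omega)
  have hneg : A ^ (2 * r) = -1 := by
    have hsq : A ^ (2 * r) * A ^ (2 * r) = 1 := by
      rw [← pow_add]
      have h42 : 2 * r + 2 * r = 4 * r := by ring
      rw [h42, hA.pow_eq_one]
    rcases mul_self_eq_one_iff.mp hsq with h1 | h1
    · exact absurd h1 (hA.pow_ne_one_of_pos_of_lt (by omega) (by omega))
    · exact h1
  -- helper: from m ≤ n and the equality, conclude n = m
  have key : ∀ n m : ℕ, n ≤ r - 2 → m ≤ r - 2 → m ≤ n →
      A ^ (2 * r * n + n * (n + 2)) = A ^ (2 * r * m + m * (m + 2)) → n = m := by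
    intro n m hn hm hle h'
    set a := 2 * r * n + n * (n + 2) with ha
    set b := 2 * r * m + m * (m + 2) with hb
    have hba : b ≤ a := by
      apply Nat.add_le_add
      · exact Nat.mul_le_mul_left _ hle
      · exact Nat.mul_le_mul hle (by omega)
    have hone : A ^ (a - b) = 1 := by
      have : A ^ b * A ^ (a - b) = A ^ b * 1 := by
        rw [mul_one, ← pow_add, Nat.add_sub_cancel' hba, h']
      exact mul_left_cancel₀ (pow_ne_zero b hA0) this
    have hdvd : (4 * r : ℕ) ∣ a - b := hA.dvd_of_pow_eq_one _ hone
    apply stmt_4_aux r hp hodd n m hn hm hle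
    have hdvdZ : ((4 * r : ℕ) : ℤ) ∣ ((a : ℤ) - b) := by
      have := Int.natCast_dvd_natCast.mpr hdvd
      rwa [Int.ofNat_sub hba] at this
    have : ((a : ℤ) - b) = ((n : ℤ) - m) * (2 * r + n + m + 2) := by
      rw [ha, hb]; push_cast; ring
    rwa [this] at hdvdZ
  constructor
  · intro h
    have h' : A ^ (2 * r * n + n * (n + 2)) = A ^ (2 * r * m + m * (m + 2)) := by
      rw [pow_add, pow_add, pow_mul A (2 * r), pow_mul A (2 * r), hneg]
      exact h
    rcases le_total m n with hle | hle
    · exact key n m hn hm hle h'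
    · exact (key m n hm hn hle h'.symm).symm
  · rintro rfl; rfl
end

section
/- Let $r \ge 2$ and $A$ a primitive $4r$-th root of unity. Define the $(r-1) \times (r-1)$ matrix $\Pi$ with entries $\Pi_{ij} = (-1)^{i+j}[(i+1)(j+1)]$ for $i, j \in \{0, \ldots, r-2\}$, where $[n]$ is the quantum integer. Then $\Pi^2 = \frac{-2r}{(A^2 - A^{-2})^2} \mathrm{Id}$; in particular $\Pi$ is invertible. -/
noncomputable def qint {K : Type*} [Field K] (A : K) (n : ℤ) : K :=
  (A ^ (2 * n) - A ^ (-(2 * n))) / (A ^ (2 : ℤ) - A ^ (-2 : ℤ))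

open Finset

section Aux

variable {r : ℕ} {q : ℂ}

lemma aux_per (hr : 1 ≤ r) (hq : IsPrimitiveRoot q (2 * r)) {u v : ℤ} (t : ℤ)
    (h : u = v + 2 * (r : ℤ) * t) : q ^ u = q ^ v := by
  have hq0 : q ≠ 0 := hq.ne_zero (by positivity)
  have hq2r : q ^ (2 * (r : ℤ)) = 1 := by
    rw [show (2 * (r : ℤ)) = ((2 * r : ℕ) : ℤ) by push_cast; ring, zpow_natCast, hq.pow_eq_one]
  rw [h, zpow_add₀ hq0, zpow_mul, hq2r, one_zpow, mul_one]

lemma aux_G (hr : 1 ≤ r) (hq : IsPrimitiveRoot q (2 * r)) (n : ℤ) :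
    ∑ m ∈ range (2 * r), q ^ (n * m) = if (2 * (r : ℤ)) ∣ n then (2 * (r : ℂ)) else 0 := by
  have h2r : ((2 * r : ℕ) : ℤ) = 2 * (r : ℤ) := by push_cast; ring
  have h1 : ∀ m : ℕ, q ^ (n * m) = (q ^ n) ^ m := fun m => by
    rw [zpow_mul, zpow_natCast]
  simp only [h1]
  have hqone : q ^ n = 1 ↔ (2 * (r : ℤ)) ∣ n := by rw [hq.zpow_eq_one_iff_dvd, h2r]
  by_cases hdvd : (2 * (r : ℤ)) ∣ n
  · rw [if_pos hdvd, hqone.mpr hdvd]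
    simp
  · rw [if_neg hdvd]
    have hne : q ^ n ≠ 1 := fun h => hdvd (hqone.mp h)
    have hq2r : q ^ (2 * (r : ℤ)) = 1 := by
      rw [← h2r, zpow_natCast, hq.pow_eq_one]
    have hpow : (q ^ n) ^ (2 * r) = 1 := by
      rw [← zpow_natCast (q ^ n), ← zpow_mul, mul_comm, zpow_mul, h2r, hq2r, one_zpow]
    rw [geom_sum_eq hne, hpow, sub_self, zero_div]

lemma aux_F (hr : 2 ≤ r) (hq : IsPrimitiveRoot q (2 * r)) (n : ℤ) :
    ∑ m ∈ range (r - 1), (q ^ (n * (m + 1)) + q ^ (-(n * (m + 1)))) =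
      (if (2 * (r : ℤ)) ∣ n then (2 * (r : ℂ)) else 0) - 1 - q ^ (n * r) := by
  have hr1 : 1 ≤ r := by omega
  have hq0 : q ≠ 0 := hq.ne_zero (by positivity)
  have hmul : ∀ u v : ℤ, q ^ u * q ^ v = q ^ (u + v) := fun u v => (zpow_add₀ hq0 u v).symm
  have h2 : ∑ m ∈ range (r - 1), q ^ (-(n * (m + 1)))
      = ∑ m ∈ range (r - 1), q ^ (n * r) * q ^ (n * (m + 1)) := by
    rw [← Finset.sum_range_reflect (fun m => q ^ (-(n * (m + 1)))) (r - 1)]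
    apply Finset.sum_congr rfl
    intro m hm
    rw [Finset.mem_range] at hm
    rw [hmul]
    apply aux_per hr1 hq (-n)
    have hc : ((r - 1 - 1 - m : ℕ) : ℤ) = (r : ℤ) - 2 - m := by omega
    rw [hc]; ring
  have hG := aux_G hr1 hq n
  have e1 : ∑ m ∈ range r, q ^ (n * (m : ℤ))
      = 1 + ∑ m ∈ range (r - 1), q ^ (n * (m + 1)) := by
    rw [show r = (r - 1) + 1 from by omega, Finset.sum_range_succ']
    push_cast
    rw [mul_zero, zpow_zero]
    ring
  have e2 : ∑ m ∈ range r, q ^ (n * ((r + m : ℕ) : ℤ))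
      = q ^ (n * r) * ∑ m ∈ range r, q ^ (n * (m : ℤ)) := by
    rw [Finset.mul_sum]
    apply Finset.sum_congr rfl
    intro m _
    rw [hmul]
    congr 1
    push_cast
    ring
  have hsplit : ∑ m ∈ range (2 * r), q ^ (n * m)
      = (1 + q ^ (n * (r : ℤ))) * (1 + ∑ m ∈ range (r - 1), q ^ (n * (m + 1))) := by
    rw [two_mul, Finset.sum_range_add, e2, e1]
    ring
  rw [hsplit] at hG
  rw [Finset.sum_add_distrib, h2, ← Finset.mul_sum]
  linear_combination hG

lemma aux_S (hr : 2 ≤ r) (hq : IsPrimitiveRoot q (2 * r)) (a c : ℤ)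
    (ha1 : 1 ≤ a) (ha2 : a ≤ (r : ℤ) - 1) (hc1 : 1 ≤ c) (hc2 : c ≤ (r : ℤ) - 1) :
    ∑ m ∈ range (r - 1),
      (q ^ (a * (m + 1)) - q ^ (-(a * (m + 1)))) * (q ^ (c * (m + 1)) - q ^ (-(c * (m + 1)))) =
      if a = c then (-2) * (r : ℂ) else 0 := by
  have hr1 : 1 ≤ r := by omega
  have hri : (2 : ℤ) ≤ r := by exact_mod_cast hr
  have hq0 : q ≠ 0 := hq.ne_zero (by positivity)
  have hterm : ∀ m : ℕ,
      (q ^ (a * ((m : ℤ) + 1)) - q ^ (-(a * (m + 1)))) * (q ^ (c * ((m : ℤ) + 1)) - q ^ (-(c * (m + 1)))) =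
      (q ^ ((a + c) * ((m : ℤ) + 1)) + q ^ (-((a + c) * ((m : ℤ) + 1)))) -
        (q ^ ((a - c) * ((m : ℤ) + 1)) + q ^ (-((a - c) * ((m : ℤ) + 1)))) := by
    intro m
    rw [show (-((a + c) * ((m : ℤ) + 1))) = -(a * (m + 1)) + -(c * (m + 1)) by ring,
        show (a + c) * ((m : ℤ) + 1) = a * (m + 1) + c * (m + 1) by ring,
        show (-((a - c) * ((m : ℤ) + 1))) = -(a * (m + 1)) + c * (m + 1) by ring,
        show (a - c) * ((m : ℤ) + 1) = a * (m + 1) + -(c * (m + 1)) by ring,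
        zpow_add₀ hq0, zpow_add₀ hq0, zpow_add₀ hq0, zpow_add₀ hq0]
    ring
  simp only [hterm]
  rw [Finset.sum_sub_distrib, aux_F hr hq, aux_F hr hq]
  have h1 : ¬ (2 * (r : ℤ)) ∣ (a + c) := by
    intro h
    have := Int.eq_zero_of_abs_lt_dvd h (by rw [abs_lt]; constructor <;> omega)
    omega
  have h2 : (2 * (r : ℤ)) ∣ (a - c) ↔ a = c := by
    constructor
    · intro h
      have := Int.eq_zero_of_abs_lt_dvd h (by rw [abs_lt]; constructor <;> omega)
      omega
    · rintro rfl; simp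
  have h3 : q ^ ((a + c) * (r : ℤ)) = q ^ ((a - c) * (r : ℤ)) :=
    aux_per hr1 hq c (by ring)
  rw [if_neg h1, h3]
  by_cases hac : a = c
  · rw [if_pos (h2.mpr hac), if_pos hac]; ring
  · rw [if_neg (fun h => hac (h2.mp h)), if_neg hac]; ring

end Aux

theorem stmt_7 (r : ℕ) (hr : 2 ≤ r) (A : ℂ) (hA : IsPrimitiveRoot A (4 * r))
    (Pi : Matrix (Fin (r - 1)) (Fin (r - 1)) ℂ)
    (hPi : ∀ i j : Fin (r - 1), Pi i j = (-1 : ℂ) ^ ((i : ℕ) + (j : ℕ)) *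
      qint A (((i : ℕ) + 1) * ((j : ℕ) + 1))) :
    Pi * Pi = ((-2 * (r : ℂ)) / (A ^ (2 : ℤ) - A ^ (-2 : ℤ)) ^ 2) • (1 : Matrix (Fin (r - 1)) (Fin (r - 1)) ℂ)
      ∧ IsUnit Pi := by
  have hA0 : A ≠ 0 := hA.ne_zero (by omega)
  have hq : IsPrimitiveRoot (A ^ 2) (2 * r) := hA.pow (by omega) (by ring)
  have hA2 : A ^ (2 : ℤ) = A ^ 2 := by norm_cast
  have hqint : ∀ n : ℤ, qint A n =
      ((A ^ 2) ^ n - (A ^ 2) ^ (-n)) / (A ^ (2 : ℤ) - A ^ (-2 : ℤ)) := by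
    intro n
    unfold qint
    rw [zpow_mul, show (-(2 * n)) = 2 * (-n) by ring, zpow_mul, hA2]
  have hdd : A ^ (2 : ℤ) - A ^ (-2 : ℤ) ≠ 0 := by
    intro h
    have h4 : A ^ (4 : ℕ) ≠ 1 := hA.pow_ne_one_of_pos_of_lt (by norm_num) (by omega)
    apply h4
    have he : A ^ (2 : ℤ) = A ^ (-2 : ℤ) := sub_eq_zero.mp h
    have : A ^ (2 : ℤ) * A ^ (2 : ℤ) = A ^ (-2 : ℤ) * A ^ (2 : ℤ) := by rw [← he]
    rw [← zpow_add₀ hA0, ← zpow_add₀ hA0] at this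
    norm_num at this
    calc A ^ (4 : ℕ) = A ^ (4 : ℤ) := by norm_cast
    _ = 1 := this
  have hrC : (r : ℂ) ≠ 0 := Nat.cast_ne_zero.mpr (by omega)
  have hcoef : (-2 * (r : ℂ)) / (A ^ (2 : ℤ) - A ^ (-2 : ℤ)) ^ 2 ≠ 0 :=
    div_ne_zero (mul_ne_zero (by norm_num) hrC) (pow_ne_zero 2 hdd)
  have hmain : Pi * Pi =
      ((-2 * (r : ℂ)) / (A ^ (2 : ℤ) - A ^ (-2 : ℤ)) ^ 2) • (1 : Matrix (Fin (r - 1)) (Fin (r - 1)) ℂ) := by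
    ext i k
    rw [Matrix.mul_apply]
    have expand : ∀ j : Fin (r - 1), Pi i j * Pi j k =
        (-1 : ℂ) ^ ((i : ℕ) + (k : ℕ)) * (((A ^ (2 : ℤ) - A ^ (-2 : ℤ)) ^ 2)⁻¹) *
        (((A ^ 2) ^ (((i : ℕ) + 1 : ℤ) * ((j : ℕ) + 1)) - (A ^ 2) ^ (-((((i : ℕ)) + 1 : ℤ) * ((j : ℕ) + 1)))) *
         ((A ^ 2) ^ (((j : ℕ) + 1 : ℤ) * ((k : ℕ) + 1)) - (A ^ 2) ^ (-((((j : ℕ)) + 1 : ℤ) * ((k : ℕ) + 1))))) := by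
      intro j
      rw [hPi, hPi, hqint, hqint]
      have hsgn : (-1 : ℂ) ^ ((i : ℕ) + (j : ℕ)) * (-1 : ℂ) ^ ((j : ℕ) + (k : ℕ))
          = (-1 : ℂ) ^ ((i : ℕ) + (k : ℕ)) := by
        rw [← pow_add, show (i : ℕ) + (j : ℕ) + ((j : ℕ) + (k : ℕ))
            = ((i : ℕ) + (k : ℕ)) + 2 * (j : ℕ) by ring, pow_add, pow_mul]
        norm_num
      rw [div_eq_mul_inv, div_eq_mul_inv, ← hsgn]
      generalize (A ^ (2 : ℤ) - A ^ (-2 : ℤ)) = D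
      ring
    simp only [expand]
    rw [← Finset.mul_sum]
    rw [Fin.sum_univ_eq_sum_range (fun m : ℕ =>
      ((A ^ 2) ^ (((i : ℕ) + 1 : ℤ) * ((m : ℕ) + 1)) - (A ^ 2) ^ (-((((i : ℕ)) + 1 : ℤ) * ((m : ℕ) + 1)))) *
      ((A ^ 2) ^ (((m : ℕ) + 1 : ℤ) * ((k : ℕ) + 1)) - (A ^ 2) ^ (-((((m : ℕ)) + 1 : ℤ) * ((k : ℕ) + 1))))) (r - 1)]
    have hilt := i.isLt
    have hklt := k.isLt
    have hS := aux_S hr hq (((i : ℕ) : ℤ) + 1) (((k : ℕ) : ℤ) + 1)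
      (by omega) (by omega) (by omega) (by omega)
    rw [show (∑ m ∈ range (r - 1),
      ((A ^ 2) ^ (((i : ℕ) + 1 : ℤ) * ((m : ℕ) + 1)) - (A ^ 2) ^ (-((((i : ℕ)) + 1 : ℤ) * ((m : ℕ) + 1)))) *
      ((A ^ 2) ^ (((m : ℕ) + 1 : ℤ) * ((k : ℕ) + 1)) - (A ^ 2) ^ (-((((m : ℕ)) + 1 : ℤ) * ((k : ℕ) + 1)))))
      = if (((i : ℕ) : ℤ) + 1) = (((k : ℕ) : ℤ) + 1) then (-2) * (r : ℂ) else 0 from by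
        rw [← hS]
        apply Finset.sum_congr rfl
        intro m _
        congr 1 <;> congr 1 <;> congr 1 <;> ring]
    rw [Matrix.smul_apply, Matrix.one_apply, smul_eq_mul]
    by_cases hik : i = k
    · subst hik
      rw [if_pos rfl, if_pos rfl]
      have h1 : (-1 : ℂ) ^ ((i : ℕ) + (i : ℕ)) = 1 := by
        rw [← two_mul, pow_mul]; norm_num
      rw [h1]
      field_simp
    · rw [if_neg (by intro h; exact hik (Fin.ext (by omega))), if_neg hik]
      ring
  refine ⟨hmain, ?_⟩
  have hinv : Pi * ((((-2 * (r : ℂ)) / (A ^ (2 : ℤ) - A ^ (-2 : ℤ)) ^ 2))⁻¹ • Pi) = 1 := by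
    rw [Matrix.mul_smul, hmain, smul_smul, inv_mul_cancel₀ hcoef, one_smul]
  exact ⟨⟨Pi, _, hinv, mul_eq_one_comm.mp hinv⟩, rfl⟩
end

section
/- Let $r \ge 2$ and $A$ a primitive $4r$-th root of unity. The equation $-A^{2n+2} - A^{-2n-2} = -A^2 - A^{-2}$ has no solution with $n \in \{1, \ldots, r-2\}$; consequently, if an element $f$ of a $K$-vector space satisfies $(-A^{2n+2}-A^{-2n-2})f = (-A^2-A^{-2})f$ for such $n$, then $f = 0$. -/
theorem stmt_18 {K : Type*} [Field K] [CharZero K] (r : ℕ) (hr : 2 ≤ r) (A : K)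
    (hA : IsPrimitiveRoot A (4 * r)) (n : ℕ) (h1 : 1 ≤ n) (h2 : n ≤ r - 2) :
    (-A ^ (2 * n + 2) - A ^ (-(2 * (n : ℤ) + 2)) ≠ -A ^ (2 : ℤ) - A ^ (-2 : ℤ)) ∧
    (∀ (V : Type) [AddCommGroup V] [Module K V] (f : V),
      (-A ^ (2 * n + 2) - A ^ (-(2 * (n : ℤ) + 2))) • f =
        (-A ^ (2 : ℤ) - A ^ (-2 : ℤ)) • f → f = 0) := by
  have hr0 : 4 * r ≠ 0 := by omega
  have hA0 : A ≠ 0 := hA.ne_zero hr0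
  have e1 : A ^ (-(2 * (n : ℤ) + 2)) = (A ^ (2 * n + 2))⁻¹ := by
    rw [← zpow_natCast A (2 * n + 2), ← zpow_neg]
    norm_num
  have e2 : A ^ (-2 : ℤ) = (A ^ 2)⁻¹ := by
    rw [← zpow_natCast A 2, ← zpow_neg]
    norm_num
  have e3 : A ^ (2 : ℤ) = A ^ 2 := by
    rw [← zpow_natCast A 2]
    norm_num
  have hne : -A ^ (2 * n + 2) - A ^ (-(2 * (n : ℤ) + 2)) ≠ -A ^ (2 : ℤ) - A ^ (-2 : ℤ) := by
    rw [e1, e2, e3]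
    intro heq
    have hp : A ^ (2 * n + 2) ≠ 0 := pow_ne_zero _ hA0
    have hp2 : A ^ 2 ≠ 0 := pow_ne_zero _ hA0
    field_simp at heq
    have hfac0 : A ^ 2 * ((A ^ (2 * n + 4) - 1) * (A ^ (2 * n) - 1)) = 0 := by
      linear_combination -heq
    have hfac : (A ^ (2 * n + 4) - 1) * (A ^ (2 * n) - 1) = 0 :=
      (mul_eq_zero.mp hfac0).resolve_left hp2
    rcases mul_eq_zero.mp hfac with h | h
    · have : (4 * r) ∣ (2 * n + 4) := (hA.pow_eq_one_iff_dvd _).mp (sub_eq_zero.mp h)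
      have := Nat.le_of_dvd (by omega) this
      omega
    · have : (4 * r) ∣ (2 * n) := (hA.pow_eq_one_iff_dvd _).mp (sub_eq_zero.mp h)
      have := Nat.le_of_dvd (by omega) this
      omega
  refine ⟨hne, ?_⟩
  intro V _ _ f hf
  have h0 : ((-A ^ (2 * n + 2) - A ^ (-(2 * (n : ℤ) + 2))) -
      (-A ^ (2 : ℤ) - A ^ (-2 : ℤ))) • f = 0 := by
    rw [sub_smul, hf, sub_self]
  rcases smul_eq_zero.mp h0 with h | h
  · exact absurd (sub_eq_zero.mp h) hne
  · exact h
end
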